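/- Let f ∈ C²(R_+^{n+1}) and suppose ∇f(x₀) ≠ 0 at some point x₀ ∈ R_+^{n+1}. Then there exist constants C > 0, ε > 0 and N > 0 such that for every k > N and every dyadic cube Q of sidelength 2^{−k} whose center lies within distance ε of x₀, the subcubes A_Q, B_Q (chosen with signs a_{Q,j} = sgn(∂_{x_j}f)(c_Q) so that a_{Q,j}(x_j − y_j) ≥ 2^{−k−1} for x ∈ A_Q, y ∈ B_Q) satisfy the average-oscillation lower bound ⨍_{A_Q} |f(x) − (f)_{B_Q}| dm_λ(x) ≥ C 2^{−k} |∇f(x₀)|, where (f)_{B_Q} denotes the m_λ-average of f over B_Q. -/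

import Mathlib

open MeasureTheory ENNReal

noncomputable def besselMeasurePi (n : ℕ) (lam : ℝ) : Measure (Fin (n + 1) → ℝ) :=
  ((volume : Measure (Fin (n + 1) → ℝ)).restrict {x | 0 < x (Fin.last n)}).withDensity
    fun x => ENNReal.ofReal (x (Fin.last n) ^ (2 * lam))

def dyadicCube (n : ℕ) (k : ℤ) (m : Fin (n + 1) → ℤ) : Set (Fin (n + 1) → ℝ) :=
  {x | ∀ j, (m j : ℝ) * 2 ^ (-k) ≤ x j ∧ x j ≤ ((m j : ℝ) + 1) * 2 ^ (-k)}

noncomputable def cubeCenter (n : ℕ) (k : ℤ) (m : Fin (n + 1) → ℤ) : Fin (n + 1) → ℝ :=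
  fun j => ((m j : ℝ) + 1 / 2) * 2 ^ (-k)

namespace Stmt9Aux

lemma abs_mul_sign (t : ℝ) : |t| * Real.sign t = t := by
  rcases lt_trichotomy t 0 with h | h | h
  · rw [Real.sign_of_neg h, abs_of_neg h]; ring
  · simp [h]
  · rw [Real.sign_of_pos h, abs_of_pos h]; ring

lemma dyadicCube_eq_pi (n : ℕ) (k : ℤ) (m : Fin (n+1) → ℤ) :
    dyadicCube n k m =
      Set.pi Set.univ fun j => Set.Icc ((m j : ℝ) * 2 ^ (-k)) (((m j : ℝ) + 1) * 2 ^ (-k)) := by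
  ext x
  simp only [dyadicCube, Set.mem_setOf_eq, Set.mem_univ_pi, Set.mem_Icc]

lemma measurableSet_dyadicCube {n : ℕ} {k : ℤ} {m : Fin (n+1) → ℤ} :
    MeasurableSet (dyadicCube n k m) := by
  rw [dyadicCube_eq_pi]
  exact MeasurableSet.univ_pi fun j => measurableSet_Icc

lemma isCompact_dyadicCube {n : ℕ} {k : ℤ} {m : Fin (n+1) → ℤ} :
    IsCompact (dyadicCube n k m) := by
  rw [dyadicCube_eq_pi]
  exact isCompact_univ_pi fun j => isCompact_Icc

lemma volume_dyadicCube (n : ℕ) (k : ℤ) (m : Fin (n+1) → ℤ) :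
    volume (dyadicCube n k m) = ENNReal.ofReal ((2:ℝ) ^ (-k)) ^ (n+1) := by
  rw [dyadicCube_eq_pi, volume_pi_pi]
  have h : ∀ j : Fin (n+1),
      volume (Set.Icc ((m j : ℝ) * 2 ^ (-k)) (((m j : ℝ) + 1) * 2 ^ (-k)))
        = ENNReal.ofReal ((2:ℝ) ^ (-k)) := by
    intro j; rw [Real.volume_Icc]; congr 1; ring
  simp only [h, Finset.prod_const, Finset.card_univ, Fintype.card_fin]

lemma bessel_apply_cube (n : ℕ) (lam : ℝ) (k : ℤ) (m : Fin (n+1) → ℤ)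
    (hsub : dyadicCube n k m ⊆ {x : Fin (n+1) → ℝ | 0 < x (Fin.last n)}) :
    besselMeasurePi n lam (dyadicCube n k m)
      = ∫⁻ x in dyadicCube n k m, ENNReal.ofReal (x (Fin.last n) ^ (2 * lam)) ∂volume := by
  rw [besselMeasurePi, withDensity_apply _ measurableSet_dyadicCube,
    Measure.restrict_restrict measurableSet_dyadicCube, Set.inter_eq_left.mpr hsub]

lemma bessel_cube_bounds (n : ℕ) (lam h H : ℝ) (hh : 0 < h) (hlam : 0 ≤ 2 * lam)
    (k : ℤ) (m : Fin (n+1) → ℤ)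
    (hlow : ∀ x ∈ dyadicCube n k m, h ≤ x (Fin.last n))
    (hhigh : ∀ x ∈ dyadicCube n k m, x (Fin.last n) ≤ H) :
    ENNReal.ofReal (h ^ (2*lam)) * volume (dyadicCube n k m)
        ≤ besselMeasurePi n lam (dyadicCube n k m) ∧
      besselMeasurePi n lam (dyadicCube n k m)
        ≤ ENNReal.ofReal (H ^ (2*lam)) * volume (dyadicCube n k m) := by
  have hsub : dyadicCube n k m ⊆ {x : Fin (n+1) → ℝ | 0 < x (Fin.last n)} :=
    fun x hx => lt_of_lt_of_le hh (hlow x hx)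
  rw [bessel_apply_cube n lam k m hsub]
  constructor
  · rw [← setLIntegral_const (dyadicCube n k m) (ENNReal.ofReal (h ^ (2*lam)))]
    refine setLIntegral_mono' measurableSet_dyadicCube fun x hx => ?_
    exact ENNReal.ofReal_le_ofReal (Real.rpow_le_rpow hh.le (hlow x hx) hlam)
  · rw [← setLIntegral_const (dyadicCube n k m) (ENNReal.ofReal (H ^ (2*lam)))]
    refine setLIntegral_mono' measurableSet_dyadicCube fun x hx => ?_
    refine ENNReal.ofReal_le_ofReal (Real.rpow_le_rpow ?_ (hhigh x hx) hlam)
    exact le_trans hh.le (hlow x hx)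

lemma le_setAverage {α : Type*} [MeasurableSpace α] {μ : Measure α} {s : Set α} {g : α → ℝ} {c : ℝ}
    (hs : MeasurableSet s) (h0 : μ s ≠ 0) (ht : μ s ≠ ⊤) (hg : IntegrableOn g s μ)
    (h : ∀ x ∈ s, c ≤ g x) : c ≤ ⨍ x in s, g x ∂μ := by
  have hpos : 0 < (μ s).toReal := ENNReal.toReal_pos h0 ht
  have hint : (μ s).toReal • c ≤ ∫ x in s, g x ∂μ := by
    rw [← Measure.real_def, ← setIntegral_const]
    exact setIntegral_mono_on (integrableOn_const ht) hg hs h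
  rw [setAverage_eq, smul_eq_mul]
  rw [smul_eq_mul] at hint
  calc c = (μ s).toReal⁻¹ * ((μ s).toReal * c) := by field_simp
    _ ≤ (μ s).toReal⁻¹ * ∫ x in s, g x ∂μ :=
        mul_le_mul_of_nonneg_left hint (inv_nonneg.2 hpos.le)

lemma setAverage_le {α : Type*} [MeasurableSpace α] {μ : Measure α} {s : Set α} {g : α → ℝ} {c : ℝ}
    (hs : MeasurableSet s) (h0 : μ s ≠ 0) (ht : μ s ≠ ⊤) (hg : IntegrableOn g s μ)
    (h : ∀ x ∈ s, g x ≤ c) : ⨍ x in s, g x ∂μ ≤ c := by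
  have h' := le_setAverage (g := fun x => -g x) (c := -c) hs h0 ht hg.neg
    (fun x hx => neg_le_neg (h x hx))
  have : ⨍ x in s, (-g x) ∂μ = -⨍ x in s, g x ∂μ := by
    simp [setAverage_eq, integral_neg]
  rw [this] at h'
  linarith

end Stmt9Aux

set_option maxHeartbeats 1000000 in
open Stmt9Aux in
/-- if `f ∈ C²(ℝ₊^{n+1})` and `∇f(x₀) ≠ 0`, then there are `C, ε > 0` and `N` such
that for every `k > N` and every dyadic cube `Q` of sidelength `2^{-k}` with center within `ε`
of `x₀`, any subcubes `A_Q, B_Q` of generation `k+2` of `Q` separated in the directions of the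
signs of `∂_j f(c_Q)` satisfy
`⨍_{A_Q} |f - (f)_{B_Q}| dm_λ ≥ C 2^{-k} |∇f(x₀)|`. -/
theorem stmt9 (n : ℕ) (hn : 1 ≤ n) (lam : ℝ) (hlam : 0 < lam)
    (f : (Fin (n + 1) → ℝ) → ℝ)
    (hf : ContDiffOn ℝ 2 f {x | 0 < x (Fin.last n)})
    (x₀ : Fin (n + 1) → ℝ) (hx₀ : 0 < x₀ (Fin.last n))
    (hgrad : fderiv ℝ f x₀ ≠ 0) :
    ∃ (C ε : ℝ) (N : ℤ), 0 < C ∧ 0 < ε ∧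
      ∀ k : ℤ, N < k → ∀ m : Fin (n + 1) → ℤ,
        dist (cubeCenter n k m) x₀ < ε →
        ∀ mA mB : Fin (n + 1) → ℤ,
          dyadicCube n (k + 2) mA ⊆ dyadicCube n k m →
          dyadicCube n (k + 2) mB ⊆ dyadicCube n k m →
          (∀ x ∈ dyadicCube n (k + 2) mA, ∀ y ∈ dyadicCube n (k + 2) mB, ∀ j,
            (2 : ℝ) ^ (-k - 1) ≤
              Real.sign (fderiv ℝ f (cubeCenter n k m) (Pi.single j 1)) * (x j - y j)) →
          C * 2 ^ (-k) * ‖fderiv ℝ f x₀‖ ≤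
            ⨍ x in dyadicCube n (k + 2) mA,
              |f x - ⨍ y in dyadicCube n (k + 2) mB, f y ∂(besselMeasurePi n lam)|
                ∂(besselMeasurePi n lam) := by
  classical
  set U : Set (Fin (n+1) → ℝ) := {x | 0 < x (Fin.last n)} with hUdef
  have hUopen : IsOpen U := isOpen_lt continuous_const (continuous_apply _)
  set φ : (Fin (n+1) → ℝ) → ((Fin (n+1) → ℝ) →L[ℝ] ℝ) := fderiv ℝ f with hφdef
  have hG : 0 < ‖φ x₀‖ := norm_pos_iff.2 hgrad
  set δ : ℝ := ‖φ x₀‖ / 16 with hδdef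
  have hδpos : 0 < δ := by positivity
  have hcont : ContinuousOn φ U :=
    hf.continuousOn_fderiv_of_isOpen hUopen (by norm_num)
  have hcx₀ : ContinuousAt φ x₀ := hcont.continuousAt (hUopen.mem_nhds hx₀)
  obtain ⟨r'', hr''pos, hr''⟩ := Metric.continuousAt_iff.1 hcx₀ δ hδpos
  set r : ℝ := min (x₀ (Fin.last n) / 2) (r'' / 2) with hrdef
  have hrpos : 0 < r := lt_min (by positivity) (by positivity)
  have hrU : ∀ z : Fin (n+1) → ℝ, dist z x₀ ≤ r →
      x₀ (Fin.last n) / 2 ≤ z (Fin.last n) ∧ z (Fin.last n) ≤ x₀ (Fin.last n) + r := by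
    intro z hz
    have h1 : dist (z (Fin.last n)) (x₀ (Fin.last n)) ≤ r := (dist_le_pi_dist z x₀ _).trans hz
    rw [Real.dist_eq] at h1
    have h2 := abs_le.1 h1
    have hr1 : r ≤ x₀ (Fin.last n) / 2 := min_le_left _ _
    exact ⟨by linarith [h2.1], by linarith [h2.2]⟩
  have hzU : ∀ z : Fin (n+1) → ℝ, dist z x₀ ≤ r → z ∈ U := by
    intro z hz
    have := (hrU z hz).1
    show 0 < z (Fin.last n)
    linarith
  have hrδ : ∀ z : Fin (n+1) → ℝ, dist z x₀ ≤ r → ‖φ z - φ x₀‖ ≤ δ := by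
    intro z hz
    have h1 : dist z x₀ < r'' :=
      lt_of_le_of_lt (hz.trans (min_le_right _ _)) (by linarith)
    have h2 := hr'' h1
    rw [dist_eq_norm] at h2
    exact h2.le
  obtain ⟨N₀, hN₀⟩ := exists_pow_lt_of_lt_one (show (0:ℝ) < r/2 by positivity)
    (show (1:ℝ)/2 < 1 by norm_num)
  refine ⟨1/4, r/2, N₀, by norm_num, by positivity, ?_⟩
  intro k hk m hcenter mA mB hA hB hsep
  set c : Fin (n+1) → ℝ := cubeCenter n k m with hcdef
  set A : Set (Fin (n+1) → ℝ) := dyadicCube n (k+2) mA with hAdef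
  set B : Set (Fin (n+1) → ℝ) := dyadicCube n (k+2) mB with hBdef
  set μ : Measure (Fin (n+1) → ℝ) := besselMeasurePi n lam with hμdef
  have h2k : (0:ℝ) < 2 ^ (-k) := zpow_pos (by norm_num) _
  have h2kr : (2:ℝ) ^ (-k) < r/2 := by
    have h1 : (2:ℝ) ^ (-k) ≤ 2 ^ (-(N₀:ℤ)) := by
      apply zpow_le_zpow_right₀ (by norm_num)
      omega
    have h2 : (2:ℝ) ^ (-(N₀:ℤ)) = (1/2 : ℝ) ^ N₀ := by
      rw [zpow_neg, zpow_natCast]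
      simp [one_div, inv_pow]
    calc (2:ℝ) ^ (-k) ≤ (1/2:ℝ) ^ N₀ := h2 ▸ h1
      _ < r/2 := hN₀
  have hQball : ∀ x ∈ dyadicCube n k m, dist x x₀ ≤ r := by
    intro x hx
    have hxc : dist x c ≤ 2 ^ (-k) / 2 := by
      rw [dist_pi_le_iff (by positivity)]
      intro j
      have h1 := (hx j).1
      have h2 := (hx j).2
      have hcj : c j = ((m j : ℝ) + 1/2) * 2 ^ (-k) := rfl
      rw [Real.dist_eq, abs_le, hcj]
      constructor <;> linarith [h1, h2]
    calc dist x x₀ ≤ dist x c + dist c x₀ := dist_triangle _ _ _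
      _ ≤ 2 ^ (-k) / 2 + r / 2 := add_le_add hxc hcenter.le
      _ ≤ r := by linarith
  have hcball : dist c x₀ ≤ r := hcenter.le.trans (by linarith)
  set G : ℝ := ‖φ x₀‖ with hGdef
  have key : ∀ x ∈ A, ∀ y ∈ B, 2 ^ (-k) * G / 4 ≤ f x - f y := by
    intro x hx y hy
    have hxball : dist x x₀ ≤ r := hQball x (hA hx)
    have hyball : dist y x₀ ≤ r := hQball y (hB hy)
    set L : (Fin (n+1) → ℝ) →L[ℝ] ℝ := φ c with hLdef
    have hTaylor : ‖f x - f y - L (x - y)‖ ≤ (2*δ) * ‖x - y‖ := by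
      apply Convex.norm_image_sub_le_of_norm_fderiv_le'
        (fun z hz => ?_) (fun z hz => ?_) (convex_closedBall x₀ r)
        (Metric.mem_closedBall.2 hyball) (Metric.mem_closedBall.2 hxball)
      · have hzU' : z ∈ U := hzU z (Metric.mem_closedBall.1 hz)
        exact (hf.contDiffAt (hUopen.mem_nhds hzU')).differentiableAt (by norm_num)
      · have h1 : ‖φ z - φ x₀‖ ≤ δ := hrδ z (Metric.mem_closedBall.1 hz)
        have h2 : ‖φ c - φ x₀‖ ≤ δ := hrδ c hcball
        calc ‖fderiv ℝ f z - L‖ = ‖(φ z - φ x₀) - (L - φ x₀)‖ := by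
              rw [hφdef]; congr 1; abel
          _ ≤ ‖φ z - φ x₀‖ + ‖L - φ x₀‖ := norm_sub_le _ _
          _ ≤ δ + δ := add_le_add h1 h2
          _ = 2*δ := by ring
    have hxynorm : ‖x - y‖ ≤ 2 ^ (-k) := by
      rw [← dist_eq_norm, dist_pi_le_iff h2k.le]
      intro j
      have h1 := ((hA hx) j).1
      have h2 := ((hA hx) j).2
      have h3 := ((hB hy) j).1
      have h4 := ((hB hy) j).2
      rw [Real.dist_eq, abs_le]
      constructor <;> linarith
    have hexp : ∀ v : Fin (n+1) → ℝ, L v = ∑ j, v j * L (Pi.single j 1) := by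
      intro v
      have hv : (∑ j, v j • (Pi.single j (1:ℝ) : Fin (n+1) → ℝ)) = v := by
        funext i
        rw [Finset.sum_apply]
        simp [Pi.single_apply]
      conv_lhs => rw [← hv]
      rw [map_sum]
      refine Finset.sum_congr rfl fun j _ => ?_
      rw [L.map_smul, smul_eq_mul]
    have hopnorm : ‖L‖ ≤ ∑ j, |L (Pi.single j 1)| := by
      apply ContinuousLinearMap.opNorm_le_bound _ (by positivity)
      intro v
      rw [hexp v]
      calc ‖∑ j, v j * L (Pi.single j 1)‖ ≤ ∑ j, ‖v j * L (Pi.single j 1)‖ :=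
            norm_sum_le _ _
        _ ≤ ∑ j, |L (Pi.single j 1)| * ‖v‖ := by
            refine Finset.sum_le_sum fun j _ => ?_
            rw [norm_mul]
            calc ‖v j‖ * ‖L (Pi.single j 1)‖ ≤ ‖v‖ * ‖L (Pi.single j 1)‖ :=
                  mul_le_mul_of_nonneg_right (norm_le_pi_norm v j) (norm_nonneg _)
              _ = |L (Pi.single j 1)| * ‖v‖ := by rw [Real.norm_eq_abs]; ring
        _ = (∑ j, |L (Pi.single j 1)|) * ‖v‖ := by rw [Finset.sum_mul]
    have hLG : G - δ ≤ ‖L‖ := by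
      have h2 : ‖φ c - φ x₀‖ ≤ δ := hrδ c hcball
      have h3 : ‖φ x₀‖ - ‖L‖ ≤ ‖φ x₀ - L‖ := norm_sub_norm_le _ _
      rw [norm_sub_rev] at h3
      simp only [hGdef, hLdef]
      linarith
    have hLlow : 2 ^ (-k-1) * (G - δ) ≤ L (x - y) := by
      rw [hexp (x - y)]
      have hterm : ∀ j, 2 ^ (-k-1) * |L (Pi.single j 1)| ≤ (x - y) j * L (Pi.single j 1) := by
        intro j
        have hs := hsep x hx y hy j
        have habs : |L (Pi.single j 1)| * Real.sign (L (Pi.single j 1)) = L (Pi.single j 1) :=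
          abs_mul_sign _
        have h1 : |L (Pi.single j 1)| * (2 ^ (-k-1))
            ≤ |L (Pi.single j 1)| * (Real.sign (L (Pi.single j 1)) * (x j - y j)) :=
          mul_le_mul_of_nonneg_left hs (abs_nonneg _)
        have h2 : |L (Pi.single j 1)| * (Real.sign (L (Pi.single j 1)) * (x j - y j))
            = (x - y) j * L (Pi.single j 1) := by
          simp only [Pi.sub_apply]
          calc |L (Pi.single j 1)| * (Real.sign (L (Pi.single j 1)) * (x j - y j))
              = (|L (Pi.single j 1)| * Real.sign (L (Pi.single j 1))) * (x j - y j) := by ring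
            _ = L (Pi.single j 1) * (x j - y j) := by rw [habs]
            _ = (x j - y j) * L (Pi.single j 1) := by ring
        linarith [h1, h2]
      have h2k1pos : (0:ℝ) < 2 ^ (-k-1) := zpow_pos (by norm_num) _
      calc 2 ^ (-k-1) * (G - δ) ≤ 2 ^ (-k-1) * ‖L‖ :=
            mul_le_mul_of_nonneg_left hLG h2k1pos.le
        _ ≤ 2 ^ (-k-1) * ∑ j, |L (Pi.single j 1)| :=
            mul_le_mul_of_nonneg_left hopnorm h2k1pos.le
        _ = ∑ j, 2 ^ (-k-1) * |L (Pi.single j 1)| := Finset.mul_sum _ _ _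
        _ ≤ ∑ j, (x - y) j * L (Pi.single j 1) := Finset.sum_le_sum fun j _ => hterm j
    have h2k1 : (2:ℝ) ^ (-k-1) = 2 ^ (-k) / 2 := by
      rw [show -k-1 = -k + (-1) by ring, zpow_add₀ (two_ne_zero), zpow_neg_one]
      ring
    have hT2 : -(2*δ*‖x - y‖) ≤ f x - f y - L (x - y) := by
      have := (abs_le.1 (by rwa [Real.norm_eq_abs] at hTaylor)).1
      linarith
    have hb : 2*δ*‖x - y‖ ≤ 2*δ*2 ^ (-k) :=
      mul_le_mul_of_nonneg_left hxynorm (by positivity)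
    rw [h2k1] at hLlow
    have hδG : δ = G/16 := hδdef
    rw [hδG] at hLlow hb
    have hp : (0:ℝ) ≤ 2 ^ (-k) * G := by positivity
    nlinarith [hLlow, hT2, hb, hp]
  -- measure bounds for the subcubes
  have hbndA : ∀ x ∈ A, x₀ (Fin.last n) / 2 ≤ x (Fin.last n)
      ∧ x (Fin.last n) ≤ x₀ (Fin.last n) + r :=
    fun x hx => hrU x (hQball x (hA hx))
  have hbndB : ∀ x ∈ B, x₀ (Fin.last n) / 2 ≤ x (Fin.last n)
      ∧ x (Fin.last n) ≤ x₀ (Fin.last n) + r :=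
    fun x hx => hrU x (hQball x (hB hx))
  have hhalfpos : 0 < x₀ (Fin.last n) / 2 := by positivity
  have hlam2 : (0:ℝ) ≤ 2 * lam := by linarith
  have hboundsA := bessel_cube_bounds n lam (x₀ (Fin.last n) / 2) (x₀ (Fin.last n) + r)
    hhalfpos hlam2 (k+2) mA (fun x hx => (hbndA x hx).1) (fun x hx => (hbndA x hx).2)
  have hboundsB := bessel_cube_bounds n lam (x₀ (Fin.last n) / 2) (x₀ (Fin.last n) + r)
    hhalfpos hlam2 (k+2) mB (fun x hx => (hbndB x hx).1) (fun x hx => (hbndB x hx).2)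
  have hvolpos : ∀ m' : Fin (n+1) → ℤ, volume (dyadicCube n (k+2) m') ≠ 0 := by
    intro m'
    rw [volume_dyadicCube]
    apply pow_ne_zero
    simp only [ne_eq, ENNReal.ofReal_eq_zero, not_le]
    exact zpow_pos (by norm_num) _
  have hvoltop : ∀ m' : Fin (n+1) → ℤ, volume (dyadicCube n (k+2) m') ≠ ⊤ := by
    intro m'
    rw [volume_dyadicCube]
    exact ENNReal.pow_ne_top ENNReal.ofReal_ne_top
  have hofRpos : ENNReal.ofReal ((x₀ (Fin.last n) / 2) ^ (2*lam)) ≠ 0 := by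
    simp only [ne_eq, ENNReal.ofReal_eq_zero, not_le]
    exact Real.rpow_pos_of_pos hhalfpos _
  have hμA0 : μ A ≠ 0 := by
    intro h0
    have h1 := hboundsA.1
    rw [h0, le_zero_iff] at h1
    exact (mul_ne_zero hofRpos (hvolpos mA)) h1
  have hμAtop : μ A ≠ ⊤ :=
    ne_top_of_le_ne_top (ENNReal.mul_ne_top ENNReal.ofReal_ne_top (hvoltop mA)) hboundsA.2
  have hμB0 : μ B ≠ 0 := by
    intro h0
    have h1 := hboundsB.1
    rw [h0, le_zero_iff] at h1
    exact (mul_ne_zero hofRpos (hvolpos mB)) h1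
  have hμBtop : μ B ≠ ⊤ :=
    ne_top_of_le_ne_top (ENNReal.mul_ne_top ENNReal.ofReal_ne_top (hvoltop mB)) hboundsB.2
  -- integrability of f on subcubes
  have hint : ∀ m' : Fin (n+1) → ℤ, dyadicCube n (k+2) m' ⊆ dyadicCube n k m →
      μ (dyadicCube n (k+2) m') ≠ ⊤ → IntegrableOn f (dyadicCube n (k+2) m') μ := by
    intro m' hsub htop
    have hsubU : dyadicCube n (k+2) m' ⊆ U := fun x hx => hzU x (hQball x (hsub hx))
    have hcontf : ContinuousOn f (dyadicCube n (k+2) m') := hf.continuousOn.mono hsubU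
    obtain ⟨M, hM⟩ := isCompact_dyadicCube.exists_bound_of_continuousOn hcontf
    refine ⟨hcontf.aestronglyMeasurable measurableSet_dyadicCube, ?_⟩
    exact HasFiniteIntegral.restrict_of_bounded (C := M) (lt_top_iff_ne_top.2 htop)
      ((ae_restrict_iff' measurableSet_dyadicCube).2 (ae_of_all _ hM))
  have hintA : IntegrableOn f A μ := hint mA hA hμAtop
  have hintB : IntegrableOn f B μ := hint mB hB hμBtop
  -- average over B
  set fB : ℝ := ⨍ y in B, f y ∂μ with hfBdef
  have hpt : ∀ x ∈ A, 2 ^ (-k) * G / 4 ≤ |f x - fB| := by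
    intro x hx
    have hfB_le : fB ≤ f x - 2 ^ (-k) * G / 4 := by
      apply setAverage_le measurableSet_dyadicCube hμB0 hμBtop hintB
      intro y hy
      have := key x hx y hy
      linarith
    have : 2 ^ (-k) * G / 4 ≤ f x - fB := by linarith
    exact this.trans (le_abs_self _)
  have hintabs : IntegrableOn (fun x => |f x - fB|) A μ := by
    have h1 : IntegrableOn (fun x => f x - fB) A μ :=
      hintA.sub (integrableOn_const hμAtop)
    exact h1.abs
  have hfinal := le_setAverage (μ := μ) (s := A) (g := fun x => |f x - fB|)
    (c := 2 ^ (-k) * G / 4) measurableSet_dyadicCube hμA0 hμAtop hintabs hpt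
  calc (1/4 : ℝ) * 2 ^ (-k) * ‖fderiv ℝ f x₀‖ = 2 ^ (-k) * G / 4 := by
        rw [hGdef, hφdef]; ring
    _ ≤ _ := hfinal
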